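/- arXiv:2011.07625 — 7 statements merged into one kernel-verified Lean document; each statement's English description precedes it below -/
import Mathlib

section
/- For every nonnegative integer s ≥ 1, the alternating sum ∑_{i=0}^{s} (-1)^i · C_i · binomial(i+1, s-i) = 0, where C_i = binomial(2i, i)/(i+1) is the i-th Catalan number. -/
lemma catalan_rec_aux (i : ℕ) : (i + 2) * catalan (i + 1) = 2 * (2 * i + 1) * catalan i := by
  have h1 := succ_mul_catalan_eq_centralBinom (i + 1)
  have h2 := succ_mul_catalan_eq_centralBinom i
  have h3 := Nat.succ_mul_centralBinom_succ i
  have : (i + 1) * ((i + 2) * catalan (i + 1)) = (i + 1) * (2 * (2 * i + 1) * catalan i) := by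
    calc (i + 1) * ((i + 2) * catalan (i + 1)) = (i + 1) * ((i + 1 + 1) * catalan (i + 1)) := by
          ring
      _ = (i + 1) * (i + 1).centralBinom := by rw [h1]
      _ = 2 * (2 * i + 1) * i.centralBinom := h3
      _ = 2 * (2 * i + 1) * ((i + 1) * catalan i) := by rw [h2]
      _ = (i + 1) * (2 * (2 * i + 1) * catalan i) := by ring
  exact Nat.eq_of_mul_eq_mul_left (by omega) this

lemma choose_aux (s i : ℕ) (h : i < s) :
    ((2 * i + 2 : ℤ) - s) * ((2 * i + 3 : ℤ) - s) * ((i + 2).choose (s - (i + 1)))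
      = (i + 2) * ((s : ℤ) - i) * ((i + 1).choose (s - i)) := by
  rcases le_or_gt s (2 * i + 2) with hs | hs
  · -- no truncation case
    have h1 := Nat.choose_mul_succ_eq (i + 1) (s - i - 1)
    have h2 := Nat.choose_succ_right_eq (i + 1) (s - i - 1)
    have e1 : s - i - 1 + 1 = s - i := by omega
    have e2 : i + 1 + 1 - (s - i - 1) = 2 * i + 3 - s := by omega
    have e3 : i + 1 - (s - i - 1) = 2 * i + 2 - s := by omega
    rw [e1, e3] at h2
    rw [e2] at h1
    have key : (2 * i + 2 - s) * (2 * i + 3 - s) * ((i + 2).choose (s - i - 1))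
        = (i + 2) * (s - i) * ((i + 1).choose (s - i)) := by
      calc (2 * i + 2 - s) * (2 * i + 3 - s) * ((i + 2).choose (s - i - 1))
          = (2 * i + 2 - s) * ((i + 1 + 1).choose (s - i - 1) * (2 * i + 3 - s)) := by ring_nf
        _ = (2 * i + 2 - s) * ((i + 1).choose (s - i - 1) * (i + 1 + 1)) := by rw [← h1]
        _ = (i + 2) * ((i + 1).choose (s - i - 1) * (2 * i + 2 - s)) := by ring
        _ = (i + 2) * ((i + 1).choose (s - i) * (s - i)) := by rw [← h2]
        _ = (i + 2) * (s - i) * ((i + 1).choose (s - i)) := by ring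
    have c1 : ((2 * i + 2 : ℤ) - s) = ((2 * i + 2 - s : ℕ) : ℤ) := by
      push_cast [Nat.cast_sub (by omega : s ≤ 2 * i + 2)]; ring
    have c2 : ((2 * i + 3 : ℤ) - s) = ((2 * i + 3 - s : ℕ) : ℤ) := by
      push_cast [Nat.cast_sub (by omega : s ≤ 2 * i + 3)]; ring
    have c3 : ((s : ℤ) - i) = ((s - i : ℕ) : ℤ) := by
      push_cast [Nat.cast_sub h.le]; ring
    have e4 : s - (i + 1) = s - i - 1 := by omega
    rw [c1, c2, c3, e4]
    exact_mod_cast congrArg (Nat.cast : ℕ → ℤ) key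
  · -- truncation case : both sides vanish
    have hb1 : (i + 1).choose (s - i) = 0 := Nat.choose_eq_zero_of_lt (by omega)
    rw [hb1]
    rcases eq_or_lt_of_le (by omega : 2 * i + 3 ≤ s) with he | hlt
    · rw [← he]; push_cast; ring
    · have hb2 : (i + 2).choose (s - (i + 1)) = 0 := Nat.choose_eq_zero_of_lt (by omega)
      rw [hb2]; push_cast; ring

theorem catalan_alternating_sum (s : ℕ) (hs : 1 ≤ s) :
    ∑ i ∈ Finset.range (s + 1),
      (-1 : ℤ) ^ i * catalan i * (i + 1).choose (s - i) = 0 := by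
  set H : ℕ → ℤ := fun j =>
    ((2 * j : ℤ) - s) * ((2 * j : ℤ) - s + 1) * (-1) ^ (j + 1) * catalan j
      * ((j + 1).choose (s - j)) with hH
  have key : ∀ i < s, ((s : ℤ) * (s + 1)) * ((-1 : ℤ) ^ i * catalan i * (i + 1).choose (s - i))
      = H (i + 1) - H i := by
    intro i hi
    have E1 := choose_aux s i hi
    have CAT : ((i : ℤ) + 2) * (catalan (i + 1) : ℤ) = 2 * (2 * i + 1) * catalan i := by
      exact_mod_cast congrArg (Nat.cast : ℕ → ℤ) (catalan_rec_aux i)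
    have c3 : ((s - i : ℕ) : ℤ) = (s : ℤ) - i := by
      push_cast [Nat.cast_sub hi.le]; ring
    simp only [hH]
    push_cast
    linear_combination (-(-1 : ℤ) ^ i * (catalan (i + 1) : ℤ)) * E1
      + (-(-1 : ℤ) ^ i * ((s : ℤ) - i) * ((i + 1).choose (s - i) : ℤ)) * CAT
  have tele : ∑ i ∈ Finset.range s,
      (((s : ℤ) * (s + 1)) * ((-1 : ℤ) ^ i * catalan i * (i + 1).choose (s - i)))
      = H s - H 0 := by
    rw [← Finset.sum_range_sub H s]
    exact Finset.sum_congr rfl fun i hi => key i (Finset.mem_range.mp hi)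
  have hH0 : H 0 = 0 := by
    rcases eq_or_lt_of_le hs with he | hlt
    · simp [hH, ← he]
    · have h1 : Nat.choose 1 s = 0 := Nat.choose_eq_zero_of_lt (by omega)
      simp [hH, h1]
  have hHs : H s = -(((s : ℤ) * (s + 1)) * ((-1 : ℤ) ^ s * catalan s)) := by
    simp only [hH, Nat.sub_self, Nat.choose_zero_right]
    push_cast
    ring
  have main : ((s : ℤ) * (s + 1)) * ∑ i ∈ Finset.range (s + 1),
      (-1 : ℤ) ^ i * catalan i * (i + 1).choose (s - i) = 0 := by
    rw [Finset.sum_range_succ, mul_add, Finset.mul_sum, tele, hH0, hHs, Nat.sub_self,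
      Nat.choose_zero_right]
    push_cast
    ring
  have hne : ((s : ℤ) * (s + 1)) ≠ 0 := by
    have : (0 : ℤ) < s := by exact_mod_cast hs
    positivity
  exact (mul_eq_zero.mp main).resolve_left hne
end

section
/- For integers l ≥ m ≥ 1, the sum over all t ≥ 1 and all compositions (m_1, ..., m_t) of m with each m_j ≥ 1, of (-1)^t · binomial(l - m_1, m_1 - 1) · ∏_{j=2}^{t} binomial(l - m_j, m_j), equals (-1)^m · C_{m-1}, where C_{m-1} is the (m-1)-st Catalan number. -/
open PowerSeries Finset

namespace CompCat

lemma headI_cons_tail {l : List ℕ} (h : l ≠ []) : l.headI :: l.tail = l := by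
  cases l with
  | nil => exact absurd rfl h
  | cons a L => rfl

lemma blocks_ne_nil {n : ℕ} (c : Composition (n + 1)) : c.blocks ≠ [] := by
  intro h
  have := c.blocks_sum
  rw [h] at this
  simp at this

lemma headI_pos {n : ℕ} (c : Composition (n + 1)) : 0 < c.blocks.headI := by
  apply c.blocks_pos
  conv => rw [← headI_cons_tail (blocks_ne_nil c)]
  exact List.mem_cons_self

lemma headI_add_tail_sum {n : ℕ} (c : Composition (n + 1)) :
    c.blocks.headI + c.blocks.tail.sum = n + 1 := by
  conv_rhs => rw [← c.blocks_sum, ← headI_cons_tail (blocks_ne_nil c)]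
  simp

lemma comp_heq {a b : ℕ} (h : a = b) (c : Composition a) (c' : Composition b)
    (hb : c.blocks = c'.blocks) : HEq c c' := by
  subst h
  rw [heq_eq_eq]
  exact Composition.ext hb

/-- Splitting a composition of `n+1` into its first block and the rest. -/
def splitEquiv (n : ℕ) : Composition (n + 1) ≃ Σ i : Fin (n + 1), Composition i where
  toFun c :=
    ⟨⟨n + 1 - c.blocks.headI, by have := headI_pos c; omega⟩,
      ⟨c.blocks.tail, fun hb => c.blocks_pos (List.mem_of_mem_tail hb), by
        show c.blocks.tail.sum = n + 1 - c.blocks.headI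
        have := headI_add_tail_sum c; have := headI_pos c; omega⟩⟩
  invFun p :=
    ⟨(n + 1 - p.1) :: p.2.blocks, by
        intro i hi
        rcases List.mem_cons.1 hi with h | h
        · have := p.1.isLt; omega
        · exact p.2.blocks_pos h, by
        have h1 := p.2.blocks_sum
        have h2 := p.1.isLt
        rw [List.sum_cons, h1]
        omega⟩
  left_inv c := by
    ext1
    have h1 := headI_pos c
    have h2 := headI_add_tail_sum c
    have : n + 1 - (n + 1 - c.blocks.headI) = c.blocks.headI := by omega
    simp only [this]
    exact headI_cons_tail (blocks_ne_nil c)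
  right_inv p := by
    rcases p with ⟨⟨i, hi⟩, c⟩
    have h1 : ((n + 1 - i) :: c.blocks).headI = n + 1 - i := rfl
    have h2 : n + 1 - (n + 1 - i) = i := by omega
    refine Sigma.ext (by simp [h1, h2]) (comp_heq (by simp [h1, h2]) _ _ rfl)

lemma sum_comp_succ (n : ℕ) (F : List ℕ → ℤ) :
    ∑ c : Composition (n + 1), F c.blocks
      = ∑ i : Fin (n + 1), ∑ c : Composition i, F ((n + 1 - (i : ℕ)) :: c.blocks) := by
  have key : ∀ c : Composition (n + 1),
      F c.blocks = (fun p : Σ i : Fin (n + 1), Composition i =>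
        F ((n + 1 - (p.1 : ℕ)) :: p.2.blocks)) (splitEquiv n c) := by
    intro c
    have h1 := headI_pos c
    have h2 := headI_add_tail_sum c
    show F c.blocks = F ((n + 1 - (n + 1 - c.blocks.headI)) :: c.blocks.tail)
    have h3 : n + 1 - (n + 1 - c.blocks.headI) = c.blocks.headI := by omega
    rw [h3, headI_cons_tail (blocks_ne_nil c)]
  rw [Fintype.sum_equiv (splitEquiv n) (fun c => F c.blocks)
    (fun p : Σ i : Fin (n + 1), Composition i => F ((n + 1 - (p.1 : ℕ)) :: p.2.blocks)) key, ← Finset.univ_sigma_univ, Finset.sum_sigma]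

/-- block weight -/
def g (l b : ℕ) : ℤ := ((l - b).choose b : ℤ)

noncomputable def T (l : ℕ) : ℕ → ℤ := fun k =>
  ∑ c : Composition k, (-1) ^ c.blocks.length * ((c.blocks.map (g l)).prod)

noncomputable def S (l : ℕ) : ℕ → ℤ := fun m =>
  ∑ c : Composition m,
    (-1 : ℤ) ^ c.length * (l - c.blocks.headI).choose (c.blocks.headI - 1) *
      ((c.blocks.tail.map (fun b => ((l - b).choose b : ℤ))).prod)

instance : Unique (Composition 0) where
  default := ⟨[], by simp, by simp⟩
  uniq c := by
    ext1
    have hs := c.blocks_sum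
    have : c.blocks = [] := by
      rw [List.eq_nil_iff_forall_not_mem]
      intro a ha
      have h1 := c.blocks_pos ha
      have h2 := List.sum_eq_zero_iff.1 hs a ha
      omega
    simp [this]

lemma T_zero (l : ℕ) : T l 0 = 1 := by
  rw [T, Fintype.sum_unique]
  show (-1 : ℤ) ^ (List.length []) * ((List.map (g l) []).prod) = 1
  simp

lemma T_succ (l n : ℕ) :
    T l (n + 1) = ∑ i : Fin (n + 1), -(g l (n + 1 - (i : ℕ))) * T l i := by
  rw [T, sum_comp_succ n (fun L => (-1) ^ L.length * ((L.map (g l)).prod))]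
  refine Finset.sum_congr rfl fun i _ => ?_
  rw [T, Finset.mul_sum]
  refine Finset.sum_congr rfl fun c _ => ?_
  simp only [List.length_cons, List.map_cons, List.prod_cons, pow_succ]
  ring

lemma S_succ (l n : ℕ) :
    S l (n + 1)
      = ∑ i : Fin (n + 1),
          -(((l - (n + 1 - (i : ℕ))).choose (n + 1 - (i : ℕ) - 1) : ℤ)) * T l i := by
  rw [S]
  rw [sum_comp_succ n (fun L =>
    (-1 : ℤ) ^ L.length * (l - L.headI).choose (L.headI - 1) *
      ((L.tail.map (fun b => ((l - b).choose b : ℤ))).prod))]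
  refine Finset.sum_congr rfl fun i _ => ?_
  rw [T, Finset.mul_sum]
  refine Finset.sum_congr rfl fun c _ => ?_
  have : (fun b => ((l - b).choose b : ℤ)) = g l := rfl
  simp only [List.headI_cons, List.tail_cons, List.length_cons, this, pow_succ]
  ring

noncomputable def gS (l : ℕ) : PowerSeries ℤ := mk (g l)
noncomputable def tS (l : ℕ) : PowerSeries ℤ := mk (T l)
noncomputable def sS (l : ℕ) : PowerSeries ℤ := mk (fun m => if m = 0 then 0 else S l m)
noncomputable def cS : PowerSeries ℤ :=
  mk (fun m => if m = 0 then 0 else (-1) ^ m * (catalan (m - 1) : ℤ))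

lemma T_succ' (l n : ℕ) :
    T l (n + 1) = -∑ p ∈ Finset.HasAntidiagonal.antidiagonal n, g l (p.1 + 1) * T l p.2 := by
  rw [T_succ, Finset.Nat.sum_antidiagonal_eq_sum_range_succ (fun a b => g l (a + 1) * T l b),
    Fin.sum_univ_eq_sum_range (fun i => -(g l (n + 1 - i)) * T l i), ← Finset.sum_neg_distrib,
    ← Finset.sum_range_reflect (fun k => -(g l (k + 1) * T l (n - k))) (n + 1)]
  refine Finset.sum_congr rfl fun i hi => ?_
  simp only [Finset.mem_range] at hi
  have h1 : n + 1 - 1 - i + 1 = n + 1 - i := by omega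
  have h2 : n - (n + 1 - 1 - i) = i := by omega
  rw [h1, h2]
  ring

lemma gS_mul_tS (l : ℕ) : gS l * tS l = 1 := by
  ext n
  rw [PowerSeries.coeff_mul]
  cases n with
  | zero =>
    simp [gS, tS, g, T_zero]
  | succ n =>
    rw [Finset.Nat.sum_antidiagonal_succ]
    simp only [gS, tS, coeff_mk]
    have h0 : g l 0 = 1 := by simp [g]
    rw [h0, one_mul]
    rw [T_succ' l n]
    have : (coeff (n + 1)) (1 : PowerSeries ℤ) = 0 := by
      rw [PowerSeries.coeff_one]; simp
    rw [this]
    ring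

lemma sS_eq (l : ℕ) : sS l = -(X * (gS (l - 1) * tS l)) := by
  ext n
  cases n with
  | zero =>
    simp [sS]
  | succ n =>
    rw [map_neg, PowerSeries.coeff_succ_X_mul, PowerSeries.coeff_mul]
    simp only [sS, gS, tS, coeff_mk, Nat.succ_ne_zero, if_false]
    rw [S_succ]
    rw [Finset.Nat.sum_antidiagonal_eq_sum_range_succ (fun a b => g (l - 1) a * T l b),
      Fin.sum_univ_eq_sum_range
        (fun i => -(((l - (n + 1 - i)).choose (n + 1 - i - 1) : ℤ)) * T l i)]
    rw [← Finset.sum_neg_distrib,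
      ← Finset.sum_range_reflect (fun k => -(g (l - 1) k * T l (n - k))) (n + 1)]
    refine Finset.sum_congr rfl fun i hi => ?_
    simp only [Finset.mem_range] at hi
    have h1 : n + 1 - 1 - i = n - i := by omega
    have h2 : n - (n - i) = i := by omega
    have h3 : n + 1 - i - 1 = n - i := by omega
    have h4 : l - (n + 1 - i) = l - 1 - (n - i) := by omega
    rw [h1, h2, h3, h4, g]
    ring

lemma gS_fib (l : ℕ) : gS (l + 2) = gS (l + 1) + X * gS l := by
  ext b
  rw [map_add]
  cases b with
  | zero =>
    simp [gS, g]
  | succ b =>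
    rw [PowerSeries.coeff_succ_X_mul]
    simp only [gS, coeff_mk, g]
    rcases le_or_gt (b + 1) (l + 1) with h | h
    · have h1 : l + 2 - (b + 1) = (l + 1 - (b + 1)) + 1 := by omega
      have h2 : l - b = l + 1 - (b + 1) := by omega
      rw [h1, h2, Nat.choose_succ_succ]
      push_cast
      ring
    · rw [Nat.choose_eq_zero_of_lt (by omega), Nat.choose_eq_zero_of_lt (by omega),
        Nat.choose_eq_zero_of_lt (by omega)]
      simp

lemma cS_eq : cS * (1 - cS) = -X := by
  rw [mul_one_sub]
  ext n
  rw [map_sub, PowerSeries.coeff_mul, map_neg, PowerSeries.coeff_X]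
  match n with
  | 0 => simp [cS]
  | 1 =>
    rw [show Finset.HasAntidiagonal.antidiagonal 1 = {(0, 1), (1, 0)} from rfl]
    simp [cS]
  | (n + 2) =>
    simp only [cS, coeff_mk]
    rw [Finset.Nat.sum_antidiagonal_succ]
    rw [Finset.Nat.sum_antidiagonal_succ']
    have e1 : ∀ p ∈ Finset.HasAntidiagonal.antidiagonal n,
        (if p.1 + 1 = 0 then 0 else (-1 : ℤ) ^ (p.1 + 1) * (catalan (p.1 + 1 - 1) : ℤ)) *
          (if p.2 + 1 = 0 then 0 else (-1 : ℤ) ^ (p.2 + 1) * (catalan (p.2 + 1 - 1) : ℤ))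
        = (-1 : ℤ) ^ (n + 2) * ((catalan p.1 * catalan p.2 : ℕ) : ℤ) := by
      intro p hp
      rw [Finset.HasAntidiagonal.mem_antidiagonal] at hp
      rw [if_neg (Nat.succ_ne_zero _), if_neg (Nat.succ_ne_zero _), Nat.succ_sub_one,
        Nat.succ_sub_one]
      have : (-1 : ℤ) ^ (p.1 + 1) * (-1 : ℤ) ^ (p.2 + 1) = (-1 : ℤ) ^ (n + 2) := by
        rw [← pow_add]
        congr 1
        omega
      push_cast
      calc (-1 : ℤ) ^ (p.1 + 1) * (catalan p.1 : ℤ) * ((-1 : ℤ) ^ (p.2 + 1) * (catalan p.2 : ℤ))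
          = (-1 : ℤ) ^ (p.1 + 1) * (-1 : ℤ) ^ (p.2 + 1) * ((catalan p.1 : ℤ) * (catalan p.2 : ℤ)) := by
            ring
        _ = _ := by rw [this]
    rw [Finset.sum_congr rfl e1, ← Finset.mul_sum, ← Nat.cast_sum]
    rw [show ∑ p ∈ Finset.HasAntidiagonal.antidiagonal n, catalan p.1 * catalan p.2 = catalan (n + 1) from
      (catalan_succ' n).symm]
    simp

lemma key (l : ℕ) : sS (l + 2) * (1 - sS (l + 1)) = -X := by
  have h1 : gS (l + 1) * tS (l + 1) = 1 := gS_mul_tS _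
  have h2 : gS (l + 2) * tS (l + 2) = 1 := gS_mul_tS _
  have e2 : sS (l + 2) = -(X * (gS (l + 1) * tS (l + 2))) := by
    have h := sS_eq (l + 2)
    rwa [show l + 2 - 1 = l + 1 by omega] at h
  have e1 : sS (l + 1) = -(X * (gS l * tS (l + 1))) := by
    have h := sS_eq (l + 1)
    rwa [show l + 1 - 1 = l by omega] at h
  calc sS (l + 2) * (1 - sS (l + 1))
      = -(X * (gS (l + 1) * tS (l + 2))) * (1 - -(X * (gS l * tS (l + 1)))) := by rw [e2, e1]
    _ = -(X * tS (l + 2) * (gS (l + 1) + X * gS l * (gS (l + 1) * tS (l + 1)))) := by ring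
    _ = -(X * tS (l + 2) * (gS (l + 1) + X * gS l)) := by rw [h1]; ring
    _ = -(X * (gS (l + 2) * tS (l + 2))) := by rw [gS_fib]; ring
    _ = -X := by rw [h2]; ring

lemma aux : ∀ m, 1 ≤ m → ∀ l, m ≤ l → S l m = (-1) ^ m * (catalan (m - 1) : ℤ) := by
  intro m
  induction m using Nat.strong_induction_on with
  | _ m IH =>
    match m with
    | 0 => intro h; omega
    | 1 =>
      intro _ l _
      rw [show (1 : ℕ) = 0 + 1 from rfl, S_succ]
      rw [Fin.sum_univ_one]
      simp [T_zero]
    | (n + 2) =>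
      intro _ l hl
      have hkey := key (l - 2)
      rw [show l - 2 + 2 = l by omega, show l - 2 + 1 = l - 1 by omega] at hkey
      have E := congrArg (coeff (n + 2)) hkey
      have C := congrArg (coeff (n + 2)) cS_eq
      rw [mul_one_sub, map_sub, PowerSeries.coeff_mul, map_neg, PowerSeries.coeff_X,
        if_neg (by omega : ¬ n + 2 = 1), neg_zero] at E C
      simp only [sS, cS, coeff_mk, Nat.succ_ne_zero, if_false] at E C
      have hsum : ∑ p ∈ Finset.HasAntidiagonal.antidiagonal (n + 2),
            (if p.1 = 0 then 0 else S l p.1) * (if p.2 = 0 then 0 else S (l - 1) p.2)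
          = ∑ p ∈ Finset.HasAntidiagonal.antidiagonal (n + 2),
            (if p.1 = 0 then 0 else (-1 : ℤ) ^ p.1 * (catalan (p.1 - 1) : ℤ)) *
              (if p.2 = 0 then 0 else (-1 : ℤ) ^ p.2 * (catalan (p.2 - 1) : ℤ)) := by
        refine Finset.sum_congr rfl fun p hp => ?_
        rw [Finset.HasAntidiagonal.mem_antidiagonal] at hp
        rcases Nat.eq_zero_or_pos p.1 with h1 | h1
        · simp [h1]
        rcases Nat.eq_zero_or_pos p.2 with h2 | h2
        · simp [h2]
        rw [if_neg (by omega : ¬ p.1 = 0), if_neg (by omega : ¬ p.2 = 0),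
          if_neg (by omega : ¬ p.1 = 0), if_neg (by omega : ¬ p.2 = 0)]
        rw [IH p.1 (by omega) h1 l (by omega), IH p.2 (by omega) h2 (l - 1) (by omega)]
      rw [hsum] at E
      linarith [E, C]

end CompCat


theorem composition_sum_eq_catalan (l m : ℕ) (hm : 1 ≤ m) (hlm : m ≤ l) :
    ∑ c : Composition m,
      (-1 : ℤ) ^ c.length * (l - c.blocks.headI).choose (c.blocks.headI - 1) *
        ((c.blocks.tail.map (fun b => ((l - b).choose b : ℤ))).prod)
    = (-1 : ℤ) ^ m * catalan (m - 1) := by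
  exact CompCat.aux m hm l hlm
end

section
/- For every integer l ≥ 1, the sum over all t ≥ 1 and all compositions (m_1, ..., m_t) of l with each m_j ≥ 1, of (-1)^t · binomial(l - m_1, m_1 - 1) · ∏_{j=2}^{t} binomial(l - m_j, m_j), equals (-1)^l · C_{l-1}. -/
open Finset PowerSeries

-- decomposition of sums over compositions by first block
lemma comp_decomp (n : ℕ) (g : List ℕ → ℤ) :
    ∑ c : Composition (n+1), g c.blocks
      = ∑ m ∈ Finset.range (n+1), ∑ c : Composition (n - m), g ((m+1) :: c.blocks) := by
  rw [← Fin.sum_univ_eq_sum_range (fun m => ∑ c : Composition (n - m), g ((m+1) :: c.blocks))]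
  have hs := Finset.sum_sigma (Finset.univ : Finset (Fin (n+1)))
      (fun m => (Finset.univ : Finset (Composition (n - m.val))))
      (fun x => g ((x.1.val+1) :: x.2.blocks))
  rw [Finset.univ_sigma_univ] at hs
  rw [← hs]
  symm
  apply Fintype.sum_bijective
    (fun x : (Σ m : Fin (n+1), Composition (n - m.val)) =>
      (⟨(x.1.val+1) :: x.2.blocks, by
          intro i hi
          rcases List.mem_cons.1 hi with h | h
          · omega
          · exact x.2.blocks_pos h, by
          simp [x.2.blocks_sum]
          omega⟩ : Composition (n+1)))
  · constructor
    · rintro ⟨m, c⟩ ⟨m', c'⟩ h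
      simp only [Composition.ext_iff, List.cons.injEq] at h
      obtain ⟨h1, h2⟩ := h
      have : m = m' := by ext; omega
      subst this
      simp only [Sigma.mk.inj_iff, heq_eq_eq, true_and]
      exact Composition.ext h2
    · rintro ⟨blocks, hpos, hsum⟩
      match blocks, hsum with
      | b :: bs, hsum =>
        have hb : 0 < b := hpos List.mem_cons_self
        have hbs : bs.sum = n + 1 - b := by simp at hsum; omega
        have hble : b ≤ n + 1 := by simp at hsum; omega
        refine ⟨⟨⟨b - 1, by omega⟩, ⟨bs, fun hi => hpos (List.mem_cons_of_mem _ hi), by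
          show bs.sum = n - (b - 1); rw [hbs]; omega⟩⟩, ?_⟩
        apply Composition.ext
        show (b - 1 + 1) :: bs = b :: bs
        have : b - 1 + 1 = b := by omega
        rw [this]
  · rintro ⟨m, c⟩
    rfl

noncomputable def Cser : PowerSeries ℤ := PowerSeries.mk fun n => (-1)^n * catalan n

lemma Cser_eq : Cser = 1 - PowerSeries.X * Cser^2 := by
  ext n
  cases n with
  | zero => simp [Cser]
  | succ n =>
    rw [map_sub, PowerSeries.coeff_one, pow_two, PowerSeries.coeff_succ_X_mul,
      PowerSeries.coeff_mul, if_neg (Nat.succ_ne_zero n), zero_sub]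
    simp only [Cser, coeff_mk]
    rw [catalan_succ' n]
    push_cast
    rw [Finset.mul_sum, ← Finset.sum_neg_distrib]
    refine Finset.sum_congr rfl ?_
    rintro ⟨i, j⟩ hij
    rw [Finset.HasAntidiagonal.mem_antidiagonal] at hij
    simp only
    subst hij
    have hpow : (-1:ℤ)^(i+j+1) = -((-1)^i * (-1)^j) := by
      rw [pow_add, pow_add]; ring
    rw [hpow]; ring

noncomputable def Fb : ℕ → PowerSeries ℤ
  | 0 => 0
  | 1 => 1
  | (n+2) => Fb (n+1) + PowerSeries.X * Fb n

lemma Fb_succ_succ (n : ℕ) : Fb (n+2) = Fb (n+1) + PowerSeries.X * Fb n := by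
  rw [Fb]

lemma Fb_coeff : ∀ n m : ℕ, (PowerSeries.coeff m) (Fb (n+1)) = ((n - m).choose m : ℤ)
  | 0, m => by
    rw [show Fb 1 = 1 from rfl, PowerSeries.coeff_one]
    rcases Nat.eq_zero_or_pos m with h | h
    · simp [h]
    · rw [if_neg (by omega)]
      rw [Nat.zero_sub, Nat.choose_eq_zero_of_lt h]
      simp
  | 1, m => by
    rw [Fb_succ_succ 0, show Fb 0 = 0 from rfl, show Fb 1 = 1 from rfl,
      mul_zero, add_zero, PowerSeries.coeff_one]
    rcases Nat.eq_zero_or_pos m with h | h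
    · simp [h]
    · rw [if_neg (by omega), Nat.choose_eq_zero_of_lt (by omega)]
      simp
  | (n+2), m => by
    rw [Fb_succ_succ (n+1), map_add, Fb_coeff (n+1) m]
    cases m with
    | zero => simp
    | succ k =>
      rw [PowerSeries.coeff_succ_X_mul, Fb_coeff n k]
      push_cast
      rcases Nat.lt_or_ge k (n+1) with h | h
      · rw [show n + 1 - k = (n - k) + 1 by omega, Nat.choose_succ_succ]
        push_cast; ring
      · rw [show n - k = 0 by omega, show n + 1 - k = 0 by omega,
          Nat.choose_eq_zero_of_lt (by omega : 0 < k + 1),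
          Nat.choose_eq_zero_of_lt (by omega : 0 < k)]
        simp

lemma key : ∀ n : ℕ, Cser * Fb (n+1) =
    Fb n + (-1)^n * (PowerSeries.X)^n * Cser^(n+1) := by
  intro n
  induction n using Nat.twoStepInduction with
  | zero =>
    rw [show Fb 1 = 1 from rfl, show Fb 0 = 0 from rfl]
    simp
  | one =>
    rw [Fb_succ_succ 0, show Fb 1 = 1 from rfl, show Fb 0 = 0 from rfl]
    have h := Cser_eq
    simp only [mul_zero, add_zero, mul_one, pow_one]
    nth_rewrite 1 [h]
    ring
  | more n ih ih1 =>
    have h := Cser_eq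
    linear_combination Cser * (Fb_succ_succ (n+1)) + ih1 + PowerSeries.X * ih
      - (Fb_succ_succ n)
      - ((-1:PowerSeries ℤ))^n * PowerSeries.X^(n+1) * Cser^(n+1) * h

noncomputable def Av (l : ℕ) : ℕ → ℤ :=
  fun r => ∑ c : Composition r, (c.blocks.map (fun b => -(((l-b).choose b : ℕ) : ℤ))).prod

lemma comp_zero_blocks (c : Composition 0) : c.blocks = [] := by
  have hs := c.blocks_sum
  rcases hc : c.blocks with _ | ⟨b, bs⟩
  · rfl
  · exfalso
    have hb := c.blocks_pos (hc ▸ (show b ∈ b :: bs from List.mem_cons_self))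
    rw [hc] at hs
    simp at hs
    omega

lemma Av_zero (l : ℕ) : Av l 0 = 1 := by
  rw [Av]
  rw [Finset.sum_congr rfl (fun c _ => by rw [comp_zero_blocks c]; rfl : 
    ∀ c ∈ (Finset.univ : Finset (Composition 0)), _ = (1:ℤ))]
  rw [Finset.sum_const, Finset.card_univ, composition_card]
  simp

lemma Av_succ (l r : ℕ) :
    Av l (r+1) = ∑ m ∈ Finset.range (r+1), -(((l-(m+1)).choose (m+1) : ℕ) : ℤ) * Av l (r-m) := by
  rw [Av, comp_decomp r (fun L => (L.map (fun b => -(((l-b).choose b : ℕ) : ℤ))).prod)]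
  refine Finset.sum_congr rfl fun m _ => ?_
  rw [Av, Finset.mul_sum]
  refine Finset.sum_congr rfl fun c _ => ?_
  rw [List.map_cons, List.prod_cons]

lemma mkAv_mul (l : ℕ) : PowerSeries.mk (Av l) * Fb (l+1) = 1 := by
  ext n
  rw [PowerSeries.coeff_mul, Finset.Nat.sum_antidiagonal_eq_sum_range_succ_mk]
  cases n with
  | zero => simp [Av_zero, Fb_coeff, PowerSeries.coeff_one]
  | succ r =>
    rw [PowerSeries.coeff_one, if_neg (Nat.succ_ne_zero r)]
    rw [Finset.sum_range_succ]
    simp only [PowerSeries.coeff_mk, Fb_coeff]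
    rw [Nat.sub_self, Nat.choose_zero_right]
    rw [Av_succ]
    rw [← Finset.sum_range_reflect]
    have : ∀ m ∈ Finset.range (r+1),
        Av l (r + 1 - 1 - m) * ((l - (r + 1 - (r + 1 - 1 - m))).choose (r + 1 - (r + 1 - 1 - m)) : ℤ)
        = -(-(((l-(m+1)).choose (m+1) : ℕ) : ℤ) * Av l (r-m)) := by
      intro m hm
      rw [Finset.mem_range] at hm
      rw [show r + 1 - 1 - m = r - m by omega, show r + 1 - (r - m) = m + 1 by omega]
      ring
    rw [Finset.sum_congr rfl this, Finset.sum_neg_distrib]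
    push_cast
    ring

theorem composition_sum_eq_catalan_self (l : ℕ) (hl : 1 ≤ l) :
    ∑ c : Composition l,
      (-1 : ℤ) ^ c.length * (l - c.blocks.headI).choose (c.blocks.headI - 1) *
        ((c.blocks.tail.map (fun b => ((l - b).choose b : ℤ))).prod)
    = (-1 : ℤ) ^ l * catalan (l - 1) := by
  obtain ⟨k, rfl⟩ : ∃ k, l = k + 1 := ⟨l - 1, by omega⟩
  -- step 1: rewrite sum via first-block decomposition
  have h1 : ∑ c : Composition (k+1),
      (-1 : ℤ) ^ c.length * ((k+1) - c.blocks.headI).choose (c.blocks.headI - 1) *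
        ((c.blocks.tail.map (fun b => (((k+1) - b).choose b : ℤ))).prod)
      = ∑ c : Composition (k+1),
        (fun L : List ℕ => (-1 : ℤ) ^ L.length * ((k+1) - L.headI).choose (L.headI - 1) *
          ((L.tail.map (fun b => (((k+1) - b).choose b : ℤ))).prod)) c.blocks := by
    refine Finset.sum_congr rfl fun c _ => ?_
    simp [Composition.length]
  rw [h1, comp_decomp k (fun L : List ℕ =>
    (-1 : ℤ) ^ L.length * ((k+1) - L.headI).choose (L.headI - 1) *
      ((L.tail.map (fun b => (((k+1) - b).choose b : ℤ))).prod))]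
  -- step 2: simplify inner sums
  have h2 : ∀ m ∈ Finset.range (k+1),
      (∑ c : Composition (k - m),
        (fun L : List ℕ => (-1 : ℤ) ^ L.length * ((k+1) - L.headI).choose (L.headI - 1) *
          ((L.tail.map (fun b => (((k+1) - b).choose b : ℤ))).prod)) ((m+1) :: c.blocks))
      = -(((k - m).choose m : ℕ) : ℤ) * Av (k+1) (k - m) := by
    intro m hm
    rw [Finset.mem_range] at hm
    rw [Av, Finset.mul_sum]
    refine Finset.sum_congr rfl fun c _ => ?_
    simp only [List.headI, List.tail, List.length_cons]
    have hmap : (c.blocks.map (fun b => -((((k+1)-b).choose b : ℕ) : ℤ))).prod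
        = (-1 : ℤ) ^ c.blocks.length * (c.blocks.map (fun b => ((((k+1)-b).choose b : ℕ) : ℤ))).prod := by
      have : (c.blocks.map (fun b => -((((k+1)-b).choose b : ℕ) : ℤ)))
          = (c.blocks.map (fun b => ((((k+1)-b).choose b : ℕ) : ℤ))).map Neg.neg := by
        rw [List.map_map]; rfl
      rw [this, List.prod_map_neg, List.length_map]
    rw [hmap]
    rw [show m + 1 - 1 = m from rfl, show (k+1) - (m+1) = k - m by omega]
    ring
  rw [Finset.sum_congr rfl h2]
  -- step 3: identify with power series coefficient
  have h3 : ∑ m ∈ Finset.range (k+1), -(((k - m).choose m : ℕ) : ℤ) * Av (k+1) (k - m)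
      = -(PowerSeries.coeff k (Fb (k+1) * PowerSeries.mk (Av (k+1)))) := by
    rw [PowerSeries.coeff_mul, Finset.Nat.sum_antidiagonal_eq_sum_range_succ_mk,
      ← Finset.sum_neg_distrib]
    refine Finset.sum_congr rfl fun m hm => ?_
    rw [Fb_coeff, PowerSeries.coeff_mk]
    ring
  rw [h3]
  -- step 4: compute the coefficient
  have h4 : Fb (k+1) * PowerSeries.mk (Av (k+1))
      = Cser - PowerSeries.X^(k+1) *
          ((-1 : PowerSeries ℤ)^(k+1) * Cser^(k+2) * PowerSeries.mk (Av (k+1))) := by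
    have hk := key (k+1)
    have hm := mkAv_mul (k+1)
    linear_combination Cser * hm - (PowerSeries.mk (Av (k+1))) * hk
  rw [h4, map_sub, PowerSeries.coeff_X_pow_mul' _ (k+1) k, if_neg (by omega)]
  simp only [Cser, PowerSeries.coeff_mk, sub_zero]
  rw [show (k+1) - 1 = k from rfl]
  ring
end

section
/- For integers l ≥ m ≥ 0 with l ≥ 2m+1, ∑_{k=0}^{m} (-1)^k · binomial(l - m + k, m - k) · C_k = binomial(l - m - 1, m), where C_k is the k-th Catalan number. -/
open Finset

/-- `(k+2) * C_{k+1} = 2(2k+1) * C_k`. -/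
lemma cat_step (k : ℕ) : (k + 2) * catalan (k + 1) = 2 * (2 * k + 1) * catalan k := by
  apply Nat.eq_of_mul_eq_mul_left (show 0 < k + 1 by omega)
  calc (k + 1) * ((k + 2) * catalan (k + 1))
      = (k + 1 + 1) * catalan (k + 1) * (k + 1) := by ring
    _ = (k + 1) * Nat.centralBinom (k + 1) := by
        rw [succ_mul_catalan_eq_centralBinom]; ring
    _ = 2 * (2 * k + 1) * Nat.centralBinom k := Nat.succ_mul_centralBinom_succ k
    _ = 2 * (2 * k + 1) * ((k + 1) * catalan k) := by
        rw [succ_mul_catalan_eq_centralBinom]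
    _ = (k + 1) * (2 * (2 * k + 1) * catalan k) := by ring

lemma choose_step_nat (k i : ℕ) :
    (k + 2 - i) * (k + 1 - i) * (k + 2).choose i
      = (i + 1) * (k + 2) * (k + 1).choose (i + 1) := by
  have h1 : (k + 2) * (k + 1).choose (i + 1) = (k + 2).choose (i + 2) * (i + 2) :=
    Nat.add_one_mul_choose_eq (k + 1) (i + 1)
  have h2 : (k + 2).choose (i + 2) * (i + 2) = (k + 2).choose (i + 1) * (k + 2 - (i + 1)) :=
    Nat.choose_succ_right_eq (k + 2) (i + 1)
  have h3 : (k + 2).choose (i + 1) * (i + 1) = (k + 2).choose i * (k + 2 - i) :=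
    Nat.choose_succ_right_eq (k + 2) i
  calc (k + 2 - i) * (k + 1 - i) * (k + 2).choose i
      = (k + 2).choose i * (k + 2 - i) * (k + 1 - i) := by ring
    _ = (k + 2).choose (i + 1) * (i + 1) * (k + 1 - i) := by rw [h3]
    _ = (i + 1) * ((k + 2).choose (i + 1) * (k + 2 - (i + 1))) := by
        rw [Nat.succ_sub_succ]; ring
    _ = (i + 1) * ((k + 2).choose (i + 2) * (i + 2)) := by rw [h2]
    _ = (i + 1) * ((k + 2) * (k + 1).choose (i + 1)) := by rw [h1]
    _ = (i + 1) * (k + 2) * (k + 1).choose (i + 1) := by ring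

lemma choose_step_int (k i : ℕ) :
    ((k : ℤ) + 2 - i) * ((k : ℤ) + 1 - i) * (k + 2).choose i
      = (i + 1) * (k + 2) * (k + 1).choose (i + 1) := by
  rcases le_or_gt i (k + 1) with h | h
  · have := choose_step_nat k i
    have h2 : i ≤ k + 2 := le_trans h (by omega)
    zify [h, h2] at this
    linarith [this]
  · rcases eq_or_lt_of_le (Nat.succ_le_of_lt h) with h' | h'
    · rw [Nat.choose_eq_zero_of_lt (by omega : k + 1 < i + 1)]
      have hz : ((k : ℤ) + 2 - i) = 0 := by
        have : i = k + 2 := by omega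
        subst this; push_cast; ring
      rw [hz]; push_cast; ring
    · rw [Nat.choose_eq_zero_of_lt (by omega : k + 1 < i + 1),
        Nat.choose_eq_zero_of_lt (by omega : k + 2 < i)]
      push_cast; ring

lemma tele_step (m k : ℕ) (hk : k < m) :
    (-(((2 * (k + 1) : ℤ)) - m + 1) * ((2 * (k + 1) : ℤ) - m) * (-1) ^ (k + 1)
        * ((k + 2).choose (m - (k + 1))) * catalan (k + 1))
      - (-((2 * k : ℤ) - m + 1) * ((2 * k : ℤ) - m) * (-1) ^ k
        * ((k + 1).choose (m - k)) * catalan k)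
    = (m : ℤ) * (m + 1) * ((-1) ^ k * ((k + 1).choose (m - k)) * catalan k) := by
  obtain ⟨i, rfl⟩ : ∃ i, m = k + 1 + i := ⟨m - k - 1, by omega⟩
  have h1 := choose_step_int k i
  have h2 : ((k : ℤ) + 2) * catalan (k + 1) = 2 * (2 * k + 1) * catalan k := by
    exact_mod_cast cat_step k
  have e1 : k + 1 + i - (k + 1) = i := by omega
  have e2 : k + 1 + i - k = i + 1 := by omega
  rw [e1, e2]
  push_cast [pow_succ]
  linear_combination ((-1 : ℤ)) ^ k * (catalan (k + 1) : ℤ) * h1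
    + ((-1 : ℤ)) ^ k * (((k + 1).choose (i + 1) : ℤ)) * ((i : ℤ) + 1) * h2

lemma lemU (m : ℕ) (hm : 1 ≤ m) :
    ∑ k ∈ range (m + 1), (-1 : ℤ) ^ k * ((k + 1).choose (m - k)) * catalan k = 0 := by
  set f : ℕ → ℤ := fun k => -((2 * k : ℤ) - m + 1) * ((2 * k : ℤ) - m) * (-1) ^ k
    * ((k + 1).choose (m - k)) * catalan k with hf
  have hf0 : f 0 = 0 := by
    rcases m with _ | _ | m
    · omega
    · simp [hf]
    · simp [hf, Nat.choose_eq_zero_of_lt (show 1 < m + 2 by omega)]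
  have hfm : f m = -((m : ℤ) + 1) * m * (-1) ^ m * catalan m := by
    simp only [hf, Nat.sub_self, Nat.choose_zero_right]
    push_cast
    ring
  have key : (m : ℤ) * (m + 1) *
      (∑ k ∈ range (m + 1), (-1 : ℤ) ^ k * ((k + 1).choose (m - k)) * catalan k) = 0 := by
    rw [Finset.sum_range_succ, mul_add, Finset.mul_sum]
    have : ∀ k ∈ range m, (m : ℤ) * (m + 1) * ((-1) ^ k * ((k + 1).choose (m - k)) * catalan k)
        = f (k + 1) - f k := by
      intro k hk
      rw [Finset.mem_range] at hk
      exact (tele_step m k hk).symm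
    rw [Finset.sum_congr rfl this, Finset.sum_range_sub, hf0, hfm]
    simp only [Nat.sub_self, Nat.choose_zero_right]
    push_cast
    ring
  have hne : ((m : ℤ) * (m + 1)) ≠ 0 := by positivity
  exact (mul_eq_zero.mp key).resolve_left hne

lemma lemA (m : ℕ) :
    ∑ k ∈ range (m + 1), (-1 : ℤ) ^ k * (k.choose (m - k)) * catalan k = (-1) ^ m := by
  induction m with
  | zero => simp
  | succ m ih =>
    have hU := lemU (m + 1) (by omega)
    rw [Finset.sum_range_succ] at hU ⊢
    have hsplit : ∀ k ∈ range (m + 1),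
        (-1 : ℤ) ^ k * ((k + 1).choose (m + 1 - k)) * catalan k
          = (-1) ^ k * (k.choose (m + 1 - k)) * catalan k
            + (-1) ^ k * (k.choose (m - k)) * catalan k := by
      intro k hk
      rw [Finset.mem_range] at hk
      have e : m + 1 - k = (m - k) + 1 := by omega
      rw [e, Nat.choose_succ_succ]
      push_cast
      ring
    rw [Finset.sum_congr rfl hsplit, Finset.sum_add_distrib, ih] at hU
    have e2 : m + 1 - (m + 1) = 0 := by omega
    rw [e2] at hU ⊢
    simp only [Nat.choose_zero_right, Nat.sub_self] at hU ⊢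
    push_cast at hU ⊢
    linear_combination hU

lemma lemS (n m : ℕ) :
    ∑ k ∈ range (m + 1), (-1 : ℤ) ^ k * ((n + 1 + k).choose (m - k)) * catalan k
      = (n.choose m : ℤ) := by
  induction n generalizing m with
  | zero =>
    rcases m with _ | m
    · simp
    · have hA1 := lemA (m + 1)
      have hA0 := lemA m
      rw [Finset.sum_range_succ] at hA1 ⊢
      have hsplit : ∀ k ∈ range (m + 1),
          (-1 : ℤ) ^ k * ((0 + 1 + k).choose (m + 1 - k)) * catalan k
            = (-1) ^ k * (k.choose (m + 1 - k)) * catalan k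
              + (-1) ^ k * (k.choose (m - k)) * catalan k := by
        intro k hk
        rw [Finset.mem_range] at hk
        have e : m + 1 - k = (m - k) + 1 := by omega
        have e2 : 0 + 1 + k = k + 1 := by omega
        rw [e, e2, Nat.choose_succ_succ]
        push_cast
        ring
      rw [Finset.sum_congr rfl hsplit, Finset.sum_add_distrib, hA0]
      have e2 : m + 1 - (m + 1) = 0 := by omega
      rw [e2] at hA1 ⊢
      simp only [Nat.choose_zero_right, Nat.sub_self] at hA1 ⊢
      rw [Nat.choose_eq_zero_of_lt (by omega : 0 < m + 1)]
      push_cast at hA1 ⊢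
      linear_combination hA1
  | succ n ih =>
    rcases m with _ | m
    · simp
    · have h1 := ih (m + 1)
      have h0 := ih m
      rw [Finset.sum_range_succ] at h1 ⊢
      have hsplit : ∀ k ∈ range (m + 1),
          (-1 : ℤ) ^ k * ((n + 1 + 1 + k).choose (m + 1 - k)) * catalan k
            = (-1) ^ k * ((n + 1 + k).choose (m + 1 - k)) * catalan k
              + (-1) ^ k * ((n + 1 + k).choose (m - k)) * catalan k := by
        intro k hk
        rw [Finset.mem_range] at hk
        have e : m + 1 - k = (m - k) + 1 := by omega
        have e2 : n + 1 + 1 + k = (n + 1 + k) + 1 := by omega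
        rw [e, e2, Nat.choose_succ_succ]
        push_cast
        ring
      rw [Finset.sum_congr rfl hsplit, Finset.sum_add_distrib, h0]
      have e2 : m + 1 - (m + 1) = 0 := by omega
      rw [e2] at h1 ⊢
      simp only [Nat.choose_zero_right] at h1 ⊢
      rw [Nat.choose_succ_succ]
      push_cast at h1 ⊢
      linear_combination h1

theorem catalan_binomial_identity (l m : ℕ) (hlm : m ≤ l) (hl : 2 * m + 1 ≤ l) :
    ∑ k ∈ Finset.range (m + 1),
      (-1 : ℤ) ^ k * (l - m + k).choose (m - k) * catalan k
    = (l - m - 1).choose m := by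
  obtain ⟨n, hn⟩ : ∃ n, l - m = n + 1 := ⟨l - m - 1, by omega⟩
  have h2 : l - m - 1 = n := by omega
  rw [h2, hn]
  exact lemS n m
end

section
/- The sequence f(m) = ∑_{k=0}^{m} (-1)^k · C_k · binomial(l - m + k, m - k) / binomial(l - m - 1, m) satisfies, for all m with 1 ≤ m and l ≥ 2m+3 (so all binomials are nonzero), the recurrence -(m+1)·f(m) + (m+2)·f(m+1) = 1; consequently f(m) = 1 for all such m. -/
/-- `f l m = ∑_{k=0}^m (-1)^k C_k * choose (l-m+k) (m-k) / choose (l-m-1) m` in `ℚ`. -/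
noncomputable def f (l m : ℕ) : ℚ :=
  ∑ k ∈ Finset.range (m + 1),
    (-1 : ℚ) ^ k * catalan k * ((l - m + k).choose (m - k) : ℚ) /
      ((l - m - 1).choose m : ℚ)

open Polynomial Finset

noncomputable def yp : ℚ[X] := X * (1 - X)

lemma coeff_one_sub_X_pow (j i : ℕ) : ((1 - X : ℚ[X]) ^ j).coeff i = (-1 : ℚ) ^ i * j.choose i := by
  have h1 : (1 - X : ℚ[X]) = C (-1) * (X + C (-1)) := by
    simp only [map_neg, map_one]; ring
  rw [h1, mul_pow, ← C_pow, coeff_C_mul, coeff_X_add_C_pow]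
  rcases le_or_gt i j with h | h
  · have : j - i + i = j := by omega
    rw [show ((-1:ℚ)^j * ((-1)^(j-i) * j.choose i)) = ((-1)^j * (-1)^(j-i)) * j.choose i by ring,
      ← pow_add, show j + (j - i) = i + 2 * (j - i) by omega, pow_add, pow_mul]
    norm_num
  · simp [Nat.choose_eq_zero_of_lt h]

lemma coeff_yp_pow (j m : ℕ) : (yp ^ j).coeff m =
    if j ≤ m then (-1 : ℚ) ^ (m - j) * j.choose (m - j) else 0 := by
  rw [yp, mul_pow, mul_comm, coeff_mul_X_pow']
  split_ifs with h
  · rw [coeff_one_sub_X_pow]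
  · rfl

lemma coeff_yp_pow_of_gt {j m : ℕ} (h : m < j) : (yp ^ j).coeff m = 0 := by
  rw [coeff_yp_pow, if_neg (by omega)]

noncomputable def Pc (N : ℕ) : ℚ[X] := ∑ k ∈ range (N + 1), C ((catalan k : ℚ)) * yp ^ k

lemma Pc_coeff (N m : ℕ) : (Pc N).coeff m =
    ∑ k ∈ range (N + 1), (catalan k : ℚ) * (yp ^ k).coeff m := by
  rw [Pc, finset_sum_coeff]
  exact Finset.sum_congr rfl fun k _ => coeff_C_mul _

lemma Pc_coeff_stable {N m : ℕ} (h : m ≤ N) : (Pc N).coeff m = (Pc m).coeff m := by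
  rw [Pc_coeff, Pc_coeff]
  refine (Finset.sum_subset (by intro x hx; simp at hx ⊢; omega) ?_).symm
  intro k hk hk'
  simp only [mem_range] at hk hk'
  rw [coeff_yp_pow_of_gt (by omega), mul_zero]

lemma catalan_succ_range (s : ℕ) :
    (catalan (s + 1) : ℚ) = ∑ i ∈ range (s + 1), (catalan i : ℚ) * catalan (s - i) := by
  rw [catalan_succ' s, Finset.Nat.sum_antidiagonal_eq_sum_range_succ_mk]
  push_cast
  rfl

lemma conv_id (m N : ℕ) (hmN : m ≤ N) (w : ℕ → ℚ) (hw : ∀ j, m < j → w j = 0) :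
    ∑ p ∈ (range (N + 1)) ×ˢ (range (N + 1)),
      ((catalan p.1 : ℚ) * catalan p.2) * w (p.1 + p.2 + 1)
    = ∑ s ∈ range (N + 1), (catalan (s + 1) : ℚ) * w (s + 1) := by
  rw [← Finset.sum_filter_of_ne (p := fun p : ℕ × ℕ => p.1 + p.2 + 1 ≤ m)
      (fun x _ hx => by
        by_contra h
        exact hx (by rw [hw _ (by omega), mul_zero]))]
  rw [← Finset.sum_filter_of_ne (s := range (N + 1)) (p := fun s : ℕ => s + 1 ≤ m)
      (fun x _ hx => by
        by_contra h
        exact hx (by rw [hw _ (by omega), mul_zero]))]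
  have step1 :
      ∑ p ∈ ((range (N + 1)) ×ˢ (range (N + 1))).filter (fun p => p.1 + p.2 + 1 ≤ m),
        ((catalan p.1 : ℚ) * catalan p.2) * w (p.1 + p.2 + 1)
      = ∑ q ∈ ((range (N + 1)).filter (fun s => s + 1 ≤ m)).sigma (fun s => range (s + 1)),
        ((catalan q.2 : ℚ) * catalan (q.1 - q.2)) * w (q.1 + 1) := by
    refine Finset.sum_nbij' (fun p => ⟨p.1 + p.2, p.1⟩) (fun q => (q.2, q.1 - q.2)) ?_ ?_ ?_ ?_ ?_
    · intro p hp
      simp only [Finset.mem_filter, Finset.mem_product, mem_range, Finset.mem_sigma] at hp ⊢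
      omega
    · intro q hq
      simp only [Finset.mem_filter, Finset.mem_product, mem_range, Finset.mem_sigma] at hq ⊢
      omega
    · intro p hp
      obtain ⟨p1, p2⟩ := p
      simp [Nat.add_sub_cancel_left]
    · intro q hq
      obtain ⟨a, b⟩ := q
      simp only [Finset.mem_filter, mem_range, Finset.mem_sigma] at hq
      simp only [Sigma.mk.inj_iff, heq_eq_eq]
      exact ⟨by omega, trivial⟩
    · intro p hp
      simp only [Finset.mem_filter, Finset.mem_product, mem_range] at hp
      simp only [Nat.add_sub_cancel_left]
  rw [step1, Finset.sum_sigma]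
  refine Finset.sum_congr rfl fun s hs => ?_
  dsimp only
  rw [← Finset.sum_mul, ← catalan_succ_range]

lemma FE (m N : ℕ) (hmN : m ≤ N) :
    (yp * Pc N ^ 2).coeff m = (Pc N).coeff m - (if m = 0 then 1 else 0) := by
  have expand : yp * Pc N ^ 2 = ∑ k ∈ range (N + 1), ∑ k' ∈ range (N + 1),
      C ((catalan k : ℚ) * (catalan k' : ℚ)) * yp ^ (k + k' + 1) := by
    rw [sq, Pc, Finset.sum_mul_sum, Finset.mul_sum]
    refine Finset.sum_congr rfl fun k _ => ?_
    rw [Finset.mul_sum]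
    refine Finset.sum_congr rfl fun k' _ => ?_
    rw [C_mul]; ring
  have h1 : (yp * Pc N ^ 2).coeff m = ∑ p ∈ (range (N + 1)) ×ˢ (range (N + 1)),
      ((catalan p.1 : ℚ) * catalan p.2) * (yp ^ (p.1 + p.2 + 1)).coeff m := by
    rw [expand, ← Finset.sum_product', finset_sum_coeff]
    exact Finset.sum_congr rfl fun p _ => coeff_C_mul _
  rw [h1, conv_id m N hmN (fun j => (yp ^ j).coeff m) (fun j hj => coeff_yp_pow_of_gt hj)]
  rw [Pc_coeff, Finset.sum_range_succ, Finset.sum_range_succ']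
  rw [coeff_yp_pow_of_gt (show m < N + 1 by omega)]
  simp [Polynomial.coeff_one]

lemma coeff_yp_mul (Q : ℚ[X]) (m : ℕ) :
    (yp * Q).coeff (m + 1) = Q.coeff m - (X * Q).coeff m := by
  rw [show yp * Q = X * (Q - X * Q) by rw [yp]; ring, coeff_X_mul, Polynomial.coeff_sub]

lemma Pc_diag_one : ∀ m, (Pc m).coeff m = 1 := by
  intro m
  induction m using Nat.strong_induction_on with
  | _ m IH =>
    have Qcoeff : ∀ b, b < m → (Pc m ^ 2).coeff b = b + 1 := by
      intro b hb
      have h2 : ∀ ij ∈ Finset.HasAntidiagonal.antidiagonal b, (Pc m).coeff ij.1 * (Pc m).coeff ij.2 = (1:ℚ) := by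
        intro ij hij
        rw [Finset.HasAntidiagonal.mem_antidiagonal] at hij
        rw [Pc_coeff_stable (show ij.1 ≤ m by omega), Pc_coeff_stable (show ij.2 ≤ m by omega),
          IH ij.1 (by omega), IH ij.2 (by omega), one_mul]
      rw [sq, coeff_mul, Finset.sum_congr rfl h2, Finset.sum_const, Finset.Nat.card_antidiagonal]
      simp
    have key := FE m m le_rfl
    rcases m with _ | _ | m''
    ·
      rw [Pc_coeff]
      simp
    ·
      rw [coeff_yp_mul] at key
      rw [Qcoeff 0 (by omega)] at key
      simp only [mul_coeff_zero, coeff_X_zero, zero_mul] at key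
      simpa using key.symm
    ·
      rw [coeff_yp_mul, coeff_X_mul, Qcoeff (m'' + 1) (by omega), Qcoeff m'' (by omega)] at key
      simp only [if_neg (by omega : ¬ (m'' + 2 = 0)), sub_zero] at key
      push_cast at key
      linarith [key]

lemma U_id (m : ℕ) :
    ∑ k ∈ range (m + 1), (-1 : ℚ) ^ k * catalan k * (k.choose (m - k) : ℚ) = (-1 : ℚ) ^ m := by
  have h := Pc_diag_one m
  rw [Pc_coeff] at h
  have h2 : ∀ k ∈ range (m + 1),
      (catalan k : ℚ) * (yp ^ k).coeff m = (-1:ℚ)^m * ((-1:ℚ)^k * catalan k * (k.choose (m-k) : ℚ)) := by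
    intro k hk
    rw [mem_range] at hk
    rw [coeff_yp_pow, if_pos (by omega)]
    have : (-1:ℚ)^(m-k) = (-1:ℚ)^m * (-1:ℚ)^k := by
      rw [← pow_add, show m + k = (m - k) + 2 * k by omega, pow_add, pow_mul]
      norm_num
    rw [this]; ring
  rw [Finset.sum_congr rfl h2, ← Finset.mul_sum] at h
  have hm : ((-1:ℚ)^m) * ((-1:ℚ)^m) = 1 := by
    rw [← pow_add, ← two_mul, pow_mul]; norm_num
  calc ∑ k ∈ range (m + 1), (-1 : ℚ) ^ k * catalan k * (k.choose (m - k) : ℚ)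
      = ((-1:ℚ)^m * (-1:ℚ)^m) * ∑ k ∈ range (m + 1), (-1 : ℚ) ^ k * catalan k * (k.choose (m - k) : ℚ) := by
        rw [hm, one_mul]
    _ = (-1:ℚ)^m := by rw [mul_assoc, h, mul_one]

noncomputable def Tq (n m : ℕ) : ℚ :=
  ∑ k ∈ range (m + 1), (-1 : ℚ) ^ k * catalan k * ((n + k).choose (m - k) : ℚ)

lemma Tq_zero (n : ℕ) : Tq n 0 = 1 := by
  simp [Tq]

lemma Tq_rec (n m : ℕ) : Tq (n + 1) (m + 1) = Tq n (m + 1) + Tq n m := by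
  rw [Tq, Tq, Tq, Finset.sum_range_succ, Finset.sum_range_succ (n := m + 1)]
  have last : ((n + 1 + (m + 1)).choose (m + 1 - (m + 1)) : ℚ) = ((n + (m + 1)).choose (m + 1 - (m + 1)) : ℚ) := by
    simp
  rw [last]
  have point : ∀ k ∈ range (m + 1), (-1:ℚ)^k * catalan k * ((n+1+k).choose (m+1-k) : ℚ)
      = (-1:ℚ)^k * catalan k * ((n+k).choose (m+1-k) : ℚ)
        + (-1:ℚ)^k * catalan k * ((n+k).choose (m-k) : ℚ) := by
    intro k hk
    rw [mem_range] at hk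
    have hc : (n+1+k).choose (m+1-k) = (n+k).choose (m+1-k) + (n+k).choose (m-k) := by
      rw [show n+1+k = (n+k)+1 by omega, show m+1-k = (m-k)+1 by omega, Nat.choose_succ_succ]
      simp [Nat.succ_eq_add_one]
      omega
    rw [hc]; push_cast; ring
  rw [Finset.sum_congr rfl point, Finset.sum_add_distrib]
  ring

lemma Tq_zero_eq (m : ℕ) : Tq 0 m = (-1 : ℚ) ^ m := by
  rw [Tq, ← U_id m]
  exact Finset.sum_congr rfl fun k _ => by rw [Nat.zero_add]

lemma Tq_succ_eq (n m : ℕ) : Tq (n + 1) m = (n.choose m : ℚ) := by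
  induction n generalizing m with
  | zero =>
    match m with
    | 0 => rw [Tq_zero]; simp
    | (m + 1) =>
      rw [Tq_rec, Tq_zero_eq, Tq_zero_eq, Nat.choose_eq_zero_of_lt (by omega)]
      push_cast [pow_succ]
      ring
  | succ n ih =>
    match m with
    | 0 => rw [Tq_zero]; simp
    | (m + 1) =>
      rw [Tq_rec, ih (m + 1), ih m, Nat.choose_succ_succ]
      push_cast
      ring

lemma f_eq_one (l m : ℕ) (hl : 2 * m + 1 ≤ l) : f l m = 1 := by
  have hn : l - m = (l - m - 1) + 1 := by omega
  have hm' : m ≤ l - m - 1 := by omega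
  rw [f, ← Finset.sum_div]
  have : ∑ k ∈ Finset.range (m + 1),
      (-1 : ℚ) ^ k * catalan k * ((l - m + k).choose (m - k) : ℚ) = Tq (l - m) m := rfl
  rw [this, hn, Tq_succ_eq, Nat.add_sub_cancel]
  rw [div_self]
  exact Nat.cast_ne_zero.mpr ((Nat.choose_pos hm').ne')


theorem f_recurrence_and_value (l m : ℕ) (hm : 1 ≤ m) (hl : 2 * m + 3 ≤ l) :
    (-((m : ℚ) + 1) * f l m + ((m : ℚ) + 2) * f l (m + 1) = 1) ∧ f l m = 1 := by
  have h1 : f l m = 1 := f_eq_one l m (by omega)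
  have h2 : f l (m + 1) = 1 := f_eq_one l (m + 1) (by omega)
  refine ⟨?_, h1⟩
  rw [h1, h2]
  ring
end

section
/- For every s ≥ 1, the number of pairs (T, w) where T is a complete binary tree with an odd number of leaves, w is a labeling of the leaves of T by elements of {1, 2} summing to s+1, equals the number of such pairs where T has an even number of leaves. -/
open Polynomial Finset
lemma sum_val_eq_card {L : ℕ} (w : Fin L → Fin 2) :
    ∑ j, (w j : ℕ) = (univ.filter (fun j => w j = 1)).card := by
  rw [Finset.card_filter]
  refine Finset.sum_congr rfl fun j _ => ?_
  have h2 := (w j).is_lt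
  by_cases h : w j = 1
  · simp [h]
  · have : (w j : ℕ) ≠ 1 := fun hh => h (Fin.ext hh)
    simp only [h, if_false]
    omega

lemma card_w (L k : ℕ) :
    Fintype.card {w : Fin L → Fin 2 // (∑ j, ((w j : ℕ) + 1)) = L + k} = L.choose k := by
  have e : {w : Fin L → Fin 2 // (∑ j, ((w j : ℕ) + 1)) = L + k} ≃
      {A : Finset (Fin L) // A.card = k} := by
    refine ⟨fun w => ⟨univ.filter (fun j => w.1 j = 1), ?_⟩,
      fun A => ⟨fun j => if j ∈ A.1 then 1 else 0, ?_⟩, ?_, ?_⟩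
    · have hw := w.2
      rw [Finset.sum_add_distrib, Finset.sum_const, card_univ, Fintype.card_fin,
        smul_eq_mul, mul_one, sum_val_eq_card] at hw
      omega
    · have : ∑ j, ((if j ∈ A.1 then (1:Fin 2) else 0 : Fin 2) : ℕ) = A.1.card := by
        rw [sum_val_eq_card]
        congr 1
        ext j
        by_cases h : j ∈ A.1 <;> simp [h]
      rw [Finset.sum_add_distrib, Finset.sum_const, card_univ, Fintype.card_fin,
        smul_eq_mul, mul_one, this, A.2, add_comm]
    · rintro ⟨w, hw⟩
      ext j
      simp only
      by_cases h : w j = 1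
      · simp [h]
      · have h2 := (w j).is_lt
        have : w j = 0 := by
          have : (w j : ℕ) ≠ 1 := fun hh => h (Fin.ext hh)
          exact Fin.ext (by omega)
        simp [h, this]
    · rintro ⟨A, hA⟩
      ext j
      simp
  rw [Fintype.card_congr e, Fintype.card_finset_len, Fintype.card_fin]


lemma catalan_alt (s : ℕ) (hs : 1 ≤ s) :
    ∑ t ∈ Finset.range (s + 1), (-1 : ℤ) ^ t * catalan t * ((t + 1).choose (s - t)) = 0 := by
  classical
  set c : ℤ[X] := ∑ t ∈ Finset.range (s + 1), Polynomial.C ((catalan t : ℤ)) * X ^ t with hc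
  have hcoeff : ∀ n, c.coeff n = if n ≤ s then (catalan n : ℤ) else 0 := by
    intro n
    rw [hc, Polynomial.finset_sum_coeff]
    simp only [Polynomial.coeff_C_mul, Polynomial.coeff_X_pow]
    by_cases h : n ≤ s
    · rw [if_pos h, Finset.sum_eq_single n]
      · rw [if_pos rfl, mul_one]
      · intro b _ hb
        rw [if_neg (Ne.symm hb), mul_zero]
      · intro hn
        exact absurd (Finset.mem_range.mpr (by omega)) hn
    · rw [if_neg h, Finset.sum_eq_zero]
      intro b hb
      rw [Finset.mem_range] at hb
      rw [if_neg (by omega), mul_zero]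
  -- Step A : X^(s+1) ∣ 1 + X*c^2 - c
  have hA : (X : ℤ[X]) ^ (s + 1) ∣ (1 + X * c ^ 2 - c) := by
    rw [Polynomial.X_pow_dvd_iff]
    intro d hd
    rw [Polynomial.coeff_sub, Polynomial.coeff_add]
    rcases d with _ | m
    · simp [hcoeff, Polynomial.mul_coeff_zero]
    · have hm : m + 1 ≤ s := by omega
      rw [Polynomial.coeff_X_mul, Polynomial.coeff_one]
      have h2 : (c ^ 2).coeff m = (catalan (m + 1) : ℤ) := by
        rw [sq, Polynomial.coeff_mul, catalan_succ']
        push_cast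
        refine Finset.sum_congr rfl fun ij hij => ?_
        rw [Finset.HasAntidiagonal.mem_antidiagonal] at hij
        rw [hcoeff, hcoeff, if_pos (by omega), if_pos (by omega)]
      rw [h2, hcoeff, if_pos hm]
      simp
  obtain ⟨R, hR⟩ := hA
  set u : ℤ[X] := -(X * (1 + X)) with hu
  set D : ℤ[X] := (1 + X) * c.comp u with hD
  have hcomp : 1 + u * (c.comp u) ^ 2 - c.comp u = (u ^ (s + 1)) * R.comp u := by
    have := congrArg (fun p : ℤ[X] => p.comp u) hR
    simpa [Polynomial.add_comp, Polynomial.sub_comp, Polynomial.mul_comp,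
      Polynomial.pow_comp, Polynomial.one_comp, Polynomial.X_comp] using this
  have key : (X : ℤ[X]) ^ (s + 1) ∣ (D - 1) * (1 + X * (D + 1)) := by
    have h1 : (D - 1) * (1 + X * (D + 1)) =
        -((1 + X) * (1 + u * (c.comp u) ^ 2 - c.comp u)) := by
      rw [hD, hu]; ring
    rw [h1, hcomp]
    have hXu : (X : ℤ[X]) ∣ u := ⟨-(1 + X), by rw [hu]; ring⟩
    exact dvd_neg.mpr (((pow_dvd_pow_of_dvd hXu (s + 1)).mul_right (R.comp u)).mul_left (1 + X))
  have hnd : ¬ (X : ℤ[X]) ∣ (1 + X * (D + 1)) := by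
    rw [Polynomial.X_dvd_iff]
    simp [Polynomial.mul_coeff_zero]
  have hdvd : (X : ℤ[X]) ^ (s + 1) ∣ (D - 1) :=
    (Polynomial.prime_X).pow_dvd_of_dvd_mul_right _ hnd key
  have hDs : D.coeff s = 0 := by
    have h0 : (D - 1).coeff s = 0 := (Polynomial.X_pow_dvd_iff.mp hdvd) s (by omega)
    have h1 : (1 : ℤ[X]).coeff s = 0 := by
      rw [Polynomial.coeff_one, if_neg (by omega)]
    have := Polynomial.coeff_sub D 1 s
    rw [h0, h1] at this
    omega
  -- compute D.coeff s explicitly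
  have hDsum : D = ∑ t ∈ Finset.range (s + 1),
      Polynomial.C ((-1 : ℤ) ^ t * catalan t) * (X ^ t * (X + 1) ^ (t + 1)) := by
    have hsum : (∑ t ∈ Finset.range (s + 1), Polynomial.C ((catalan t : ℤ)) * X ^ t).comp u
        = ∑ t ∈ Finset.range (s + 1), (Polynomial.C ((catalan t : ℤ)) * X ^ t).comp u := by
      simp [Polynomial.comp, Polynomial.eval₂_finset_sum]
    rw [hD, hc, hsum, Finset.mul_sum]
    refine Finset.sum_congr rfl fun t _ => ?_
    rw [Polynomial.mul_comp, Polynomial.C_comp, Polynomial.pow_comp, Polynomial.X_comp]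
    rw [map_mul, map_pow, map_neg, map_one]
    rw [hu, neg_pow, mul_pow]
    ring
  rw [hDsum, Polynomial.finset_sum_coeff] at hDs
  rw [← hDs]
  refine Finset.sum_congr rfl fun t ht => ?_
  rw [Finset.mem_range] at ht
  rw [Polynomial.coeff_C_mul]
  have hts : s = (s - t) + t := by omega
  conv_rhs => rw [hts, Polynomial.coeff_X_pow_mul]
  rw [Polynomial.coeff_X_add_one_pow]

lemma tree_inner_sum (s t : ℕ) (ht : t < s + 1) (P : ℕ → Prop) [DecidablePred P] :
    (∑ T ∈ BinaryTree.treesOfNumNodesEq t,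
      (if P T.numLeaves then
        Fintype.card {w : Fin T.numLeaves → Fin 2 // (∑ j, ((w j : ℕ) + 1)) = s + 1}
       else 0))
    = if P (t + 1) then catalan t * (t + 1).choose (s - t) else 0 := by
  have hcard : Fintype.card {w : Fin (t + 1) → Fin 2 // (∑ j, ((w j : ℕ) + 1)) = s + 1}
      = (t + 1).choose (s - t) := by
    have h : s + 1 = (t + 1) + (s - t) := by omega
    rw [h]
    exact card_w (t + 1) (s - t)
  calc (∑ T ∈ BinaryTree.treesOfNumNodesEq t,
      (if P T.numLeaves then
        Fintype.card {w : Fin T.numLeaves → Fin 2 // (∑ j, ((w j : ℕ) + 1)) = s + 1}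
       else 0))
      = ∑ _T ∈ BinaryTree.treesOfNumNodesEq t,
        (if P (t + 1) then (t + 1).choose (s - t) else 0) := by
        refine Finset.sum_congr rfl fun T hT => ?_
        have hTL : T.numLeaves = t + 1 := by
          rw [BinaryTree.numLeaves_eq_numNodes_succ, BinaryTree.mem_treesOfNumNodesEq.mp hT]
        rw [hTL, hcard]
    _ = if P (t + 1) then catalan t * (t + 1).choose (s - t) else 0 := by
        rw [Finset.sum_const, BinaryTree.treesOfNumNodesEq_card_eq_catalan, smul_eq_mul,
          mul_ite, mul_zero]

/-- For `s ≥ 1`, pairs `(T, w)` of a complete binary tree `T` (encoded as a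
`Tree Unit`, whose leaves are the `nil`s) together with a labeling `w` of its
leaves by `{1, 2}` summing to `s + 1`: as many have an odd number of leaves as
an even number of leaves. -/
theorem odd_even_leaf_pairs (s : ℕ) (hs : 1 ≤ s) :
    ∑ t ∈ Finset.range (s + 1), ∑ T ∈ BinaryTree.treesOfNumNodesEq t,
      (if Odd T.numLeaves then
        Fintype.card {w : Fin T.numLeaves → Fin 2 // (∑ j, ((w j : ℕ) + 1)) = s + 1}
       else 0)
    = ∑ t ∈ Finset.range (s + 1), ∑ T ∈ BinaryTree.treesOfNumNodesEq t,
      (if Even T.numLeaves then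
        Fintype.card {w : Fin T.numLeaves → Fin 2 // (∑ j, ((w j : ℕ) + 1)) = s + 1}
       else 0) := by
  classical
  rw [Finset.sum_congr rfl (fun t ht => tree_inner_sum s t (Finset.mem_range.mp ht) Odd),
    Finset.sum_congr rfl (fun t ht => tree_inner_sum s t (Finset.mem_range.mp ht) Even)]
  simp only [Nat.odd_add_one, Nat.even_add_one, Nat.not_odd_iff_even]
  have hz : (∑ t ∈ Finset.range (s + 1),
        (if Even t then (catalan t * (t + 1).choose (s - t) : ℤ) else 0))
      = ∑ t ∈ Finset.range (s + 1),
        (if ¬ Even t then (catalan t * (t + 1).choose (s - t) : ℤ) else 0) := by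
    have h := catalan_alt s hs
    have hterm : ∀ t, (-1 : ℤ) ^ t * catalan t * ((t + 1).choose (s - t))
        = (if Even t then (catalan t * (t + 1).choose (s - t) : ℤ) else 0)
          - (if ¬ Even t then (catalan t * (t + 1).choose (s - t) : ℤ) else 0) := by
      intro t
      by_cases hE : Even t
      · rw [if_pos hE, if_neg (not_not.mpr hE), hE.neg_one_pow]
        ring
      · rw [if_neg hE, if_pos hE, ((Nat.not_even_iff_odd.mp hE)).neg_one_pow]
        ring
    rw [Finset.sum_congr rfl (fun t _ => hterm t), Finset.sum_sub_distrib] at h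
    linarith
  have hcast := hz
  exact_mod_cast hcast
end

section
/- For all s ≥ 1, ∑_{i=0}^{s} (-1)^i · (1/(i+1)) · binomial(2i, i) · binomial(i+1, s-i) = 0, where the sum is taken in the rational numbers. -/
set_option maxHeartbeats 1000000

/-- Cast of the key binomial identity with real subtraction. -/
lemma key_choose (i k : ℕ) (hk : 1 ≤ k) :
    ((i+1).choose k : ℚ) * k * (i+2) =
      ((i+2).choose (k-1) : ℚ) * ((i:ℚ)+3-k) * ((i:ℚ)+2-k) := by
  rcases le_or_gt k (i+1) with h | h
  · -- genuine case: use the two standard identities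
    obtain ⟨k, rfl⟩ : ∃ m, k = m + 1 := ⟨k - 1, by omega⟩
    have h1 : (i+2).choose (k+1) * (k+1) = (i+2).choose k * ((i+2) - k) :=
      Nat.choose_succ_right_eq (i+2) k
    have h2 : (i+2) * (i+1).choose (k+1) = (i+2).choose (k+2) * (k+2) :=
      Nat.add_one_mul_choose_eq (i+1) (k+1)
    have h3 : (i+2).choose (k+2) * (k+2) = (i+2).choose (k+1) * ((i+2) - (k+1)) :=
      Nat.choose_succ_right_eq (i+2) (k+1)
    have e1 : ((i+2).choose (k+1) : ℚ) * ((k:ℚ)+1) = (i+2).choose k * ((i:ℚ)+2 - k) := by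
      have := congrArg (Nat.cast : ℕ → ℚ) h1
      push_cast [Nat.cast_sub (by omega : k ≤ i+2)] at this
      linarith [this]
    have e2 : ((i:ℚ)+2) * ((i+1).choose (k+1) : ℚ) = ((i+2).choose (k+2) : ℚ) * ((k:ℚ)+2) := by
      exact_mod_cast congrArg (Nat.cast : ℕ → ℚ) h2
    have e3 : ((i+2).choose (k+2) : ℚ) * ((k:ℚ)+2) = ((i+2).choose (k+1) : ℚ) * ((i:ℚ)+1 - k) := by
      have := congrArg (Nat.cast : ℕ → ℚ) h3
      push_cast [Nat.cast_sub (by omega : k ≤ i+1)] at this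
      linarith [this]
    have e23 : ((i:ℚ)+2) * ((i+1).choose (k+1) : ℚ)
        = ((i+2).choose (k+1) : ℚ) * ((i:ℚ)+1 - k) := by linarith [e2, e3]
    simp only [Nat.add_sub_cancel]
    push_cast
    linear_combination ((k:ℚ)+1) * e23 + ((i:ℚ)+1-(k:ℚ)) * e1
  · -- degenerate cases
    have hz : ((i+1).choose k : ℚ) = 0 := by
      rw [Nat.choose_eq_zero_of_lt h]; simp
    rw [hz]
    rcases Nat.lt_or_ge k (i+2) with h2 | h2
    · omega
    rcases Nat.eq_or_lt_of_le h2 with h2 | h2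
    · -- k = i+2
      have : ((i:ℚ)+2-k) = 0 := by rw [← h2]; push_cast; ring
      rw [this]; ring
    rcases Nat.eq_or_lt_of_le h2 with h3 | h3
    · -- k = i+3
      have : ((i:ℚ)+3-k) = 0 := by rw [← h3]; push_cast; ring
      rw [this]; ring
    · -- k ≥ i+4
      have : ((i+2).choose (k-1) : ℚ) = 0 := by
        rw [Nat.choose_eq_zero_of_lt (by omega)]; simp
      rw [this]; ring

theorem catalan_alternating_sum_rat (s : ℕ) (hs : 1 ≤ s) :
    ∑ i ∈ Finset.range (s + 1),
      (-1 : ℚ) ^ i * (1 / ((i : ℚ) + 1)) * (2 * i).choose i * (i + 1).choose (s - i) = 0 := by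
  set g : ℕ → ℚ := fun i =>
    if i ≤ s then
      (-(((2*i:ℚ) - s + 1) * ((2*i:ℚ) - s)) / ((s:ℚ) * ((s:ℚ)+1))) *
        ((-1 : ℚ) ^ i * (1 / ((i : ℚ) + 1)) * (2 * i).choose i * (i + 1).choose (s - i))
    else 0 with hg
  have hs0 : (s : ℚ) ≠ 0 := by exact_mod_cast Nat.one_le_iff_ne_zero.mp hs
  have hs1 : (s : ℚ) + 1 ≠ 0 := by positivity
  have step : ∀ i ∈ Finset.range (s+1),
      (-1 : ℚ) ^ i * (1 / ((i : ℚ) + 1)) * (2 * i).choose i * (i + 1).choose (s - i)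
        = g (i+1) - g i := by
    intro i hi
    simp only [Finset.mem_range] at hi
    have hi' : i ≤ s := by omega
    have hi1 : ((i:ℚ)+1) ≠ 0 := by positivity
    rcases Nat.eq_or_lt_of_le hi' with rfl | hilt
    · -- i = s
      have h1 : ¬ (i + 1 ≤ i) := by omega
      simp only [hg, if_neg h1, if_pos le_rfl, Nat.sub_self]
      have hA : (-(((2*(i:ℚ)) - i + 1) * ((2*(i:ℚ)) - i)) / ((i:ℚ) * ((i:ℚ)+1))) = -1 := by
        field_simp
        ring
      rw [hA]
      ring
    · -- i < s
      obtain ⟨k, hsk, hk1⟩ : ∃ k, s = i + k ∧ 1 ≤ k := ⟨s - i, by omega, by omega⟩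
      have h1 : i + 1 ≤ s := by omega
      simp only [hg, if_pos hi', if_pos h1]
      have hsub1 : s - i = k := by omega
      have hsub2 : s - (i+1) = k - 1 := by omega
      rw [hsub1, hsub2]
      have hc : ((2*(i+1)).choose (i+1) : ℚ) * ((i:ℚ)+1) = 2 * (2*(i:ℚ)+1) * ((2*i).choose i) := by
        have h := congrArg (Nat.cast : ℕ → ℚ) (Nat.succ_mul_centralBinom_succ i)
        simp only [Nat.centralBinom] at h
        push_cast at h
        push_cast
        linarith [h]
      have hkey := key_choose i k hk1
      have hcast : (s : ℚ) = (i:ℚ) + k := by exact_mod_cast congrArg (Nat.cast : ℕ → ℚ) hsk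
      rw [hcast]
      have hi2 : ((i:ℚ)+2) ≠ 0 := by positivity
      have hik : ((i:ℚ)+(k:ℚ)) ≠ 0 := by rw [← hcast]; exact hs0
      have hik1 : ((i:ℚ)+(k:ℚ)+1) ≠ 0 := by
        rw [show (i:ℚ)+(k:ℚ)+1 = ((i:ℚ)+(k:ℚ))+1 by ring, ← hcast]; exact hs1
      push_cast
      field_simp
      linear_combination
        (-((-1:ℚ)^i) * ((i:ℚ)+3-(k:ℚ)) *
            ((i:ℚ)+2-(k:ℚ)) * ((i+2).choose (k-1) : ℚ)) * hc +
        ((-1:ℚ)^i * 2 * (2*(i:ℚ)+1) *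
            ((2*i).choose i : ℚ)) * hkey
  rw [Finset.sum_congr rfl step, Finset.sum_range_sub]
  have hA : g (s+1) = 0 := by simp [hg]
  have hB : g 0 = 0 := by
    rcases Nat.eq_or_lt_of_le hs with rfl | hs2
    · simp [hg]
    · have h0 : (1:ℕ).choose (s - 0) = 0 := Nat.choose_eq_zero_of_lt (by omega)
      simp only [hg, if_pos (Nat.zero_le s)]
      have h0' : (0+1).choose (s-0) = 0 := by simpa using h0
      rw [h0']
      simp
  rw [hA, hB, sub_zero]
end
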